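/- Let C ⊆ 𝔤 be a pointed invariant cone with τ(C) = −C. Then {x ∈ 𝔤 : h − e^{t·ad x}(h) ∈ C for all t ≥ 0} = C₊ + 𝔤⁰ + C₋. (This computes the Lie wedge L(S(h,C)) of the closed subsemigroup S(h,C) = {g : Ad(g)h ∈ h − C}: it equals C₊ ⊕ 𝔤⁰ ⊕ C₋.) -/

import Mathlib

/-- The exponential `e^{ad y}` of the endomorphism `ad y` of a topological Lie algebra,
defined by the exponential series. -/
noncomputable def expAd {L : Type*} [LieRing L] [LieAlgebra ℝ L] [TopologicalSpace L]
    (y : L) (x : L) : L :=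
  ∑' n : ℕ, ((n.factorial : ℝ)⁻¹) • ((LieAlgebra.ad ℝ L y ^ n) x)

open NormedSpace Module
section Aux
variable {L : Type*} [LieRing L] [LieAlgebra ℝ L]
    [TopologicalSpace L] [IsTopologicalAddGroup L] [ContinuousSMul ℝ L] [T2Space L]
    [FiniteDimensional ℝ L]
set_option linter.unusedSectionVars false
noncomputable def eqE : L ≃L[ℝ] EuclideanSpace ℝ (Fin (finrank ℝ L)) := toEuclidean
local notation "E" => EuclideanSpace ℝ (Fin (finrank ℝ L))
noncomputable def TT (y : L) : E →L[ℝ] E :=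
  LinearMap.toContinuousLinearMap
    ((eqE (L := L)).toLinearMap ∘ₗ (LieAlgebra.ad ℝ L y) ∘ₗ (eqE (L := L)).symm.toLinearMap)

lemma TT_apply (y x : L) : TT y (eqE x) = eqE (⁅y, x⁆) := by
  simp [TT, LieAlgebra.ad_apply]

lemma TT_pow_apply (y : L) (n : ℕ) (x : L) :
    ((TT y) ^ n) (eqE x) = eqE (((LieAlgebra.ad ℝ L y) ^ n) x) := by
  induction n generalizing x with
  | zero => simp
  | succ n ih =>
      rw [pow_succ', pow_succ']
      simp only [ContinuousLinearMap.mul_apply, Module.End.mul_apply, LieAlgebra.ad_apply]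
      rw [ih, TT_apply]

lemma TT_smul (s : ℝ) (y : L) : TT (s • y) = s • TT y := by
  ext v
  simp [TT, map_smul]

lemma TT_zero : TT (0 : L) = 0 := by
  ext v; simp [TT]

lemma exp_apply (A : E →L[ℝ] E) (v : E) :
    exp A v = ∑' n : ℕ, ((n.factorial : ℝ)⁻¹) • ((A ^ n) v) := by
  have hs := (expSeries_summable' (𝕂 := ℝ) A).hasSum
  have h2 := hs.mapL (ContinuousLinearMap.apply ℝ E v)
  rw [exp_eq_tsum ℝ]
  have h3 := h2.tsum_eq
  simp only [ContinuousLinearMap.apply_apply, ContinuousLinearMap.smul_apply] at h3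
  rw [← h3]

lemma hasSum_expAd (y x : L) :
    HasSum (fun n : ℕ => ((n.factorial : ℝ)⁻¹) • ((LieAlgebra.ad ℝ L y ^ n) x))
      ((eqE (L := L)).symm (exp (TT y) (eqE x))) := by
  have hs := (expSeries_summable' (𝕂 := ℝ) (TT y)).hasSum
  have h2 := hs.mapL ((ContinuousLinearMap.apply ℝ E (eqE x)))
  have h3 := h2.mapL (eqE (L := L)).symm.toContinuousLinearMap
  simpa only [ContinuousLinearMap.apply_apply, ContinuousLinearEquiv.coe_coe,
    ContinuousLinearMap.coe_coe, ContinuousLinearMap.smul_apply, map_smul, TT_pow_apply,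
    ContinuousLinearEquiv.symm_apply_apply, exp_eq_tsum ℝ] using h3

lemma expAd_eq (y x : L) :
    expAd y x = (eqE (L := L)).symm (exp (TT y) (eqE x)) :=
  (hasSum_expAd y x).tsum_eq

lemma eL_expAd (y x : L) : eqE (expAd y x) = exp (TT y) (eqE x) := by
  rw [expAd_eq]; simp

lemma expAd_add (y p q : L) : expAd y (p + q) = expAd y p + expAd y q := by
  simp [expAd_eq, map_add]

lemma expAd_smul_arg (y : L) (t : ℝ) (p : L) : expAd y (t • p) = t • expAd y p := by
  simp [expAd_eq, map_smul]

lemma ad_pow_eigen (h : L) (r : ℝ) (u : L) (hu : ⁅h, u⁆ = r • u) (n : ℕ) :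
    ((LieAlgebra.ad ℝ L h) ^ n) u = r ^ n • u := by
  induction n with
  | zero => simp
  | succ n ih =>
      rw [pow_succ', pow_succ']
      simp only [Module.End.mul_apply, LieAlgebra.ad_apply]
      rw [ih, lie_smul, hu, smul_smul]
      congr 1
      ring

lemma expAd_eigen (h : L) (s r : ℝ) (u : L) (hu : ⁅h, u⁆ = r • u) :
    expAd (s • h) u = Real.exp (s * r) • u := by
  unfold expAd
  have had : LieAlgebra.ad ℝ L (s • h) = s • LieAlgebra.ad ℝ L h := by
    simp [map_smul]
  have hfam : ∀ n : ℕ, ((n.factorial : ℝ)⁻¹) • ((LieAlgebra.ad ℝ L (s • h) ^ n) u)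
      = ((n.factorial : ℝ)⁻¹ * (s * r) ^ n) • u := by
    intro n
    rw [had, smul_pow, LinearMap.smul_apply, ad_pow_eigen h r u hu, smul_smul, smul_smul,
      mul_pow]
    congr 1
    ring
  rw [tsum_congr hfam]
  have hsum : Summable (fun n : ℕ => ((n.factorial : ℝ)⁻¹ * (s * r) ^ n)) := by
    simpa [smul_eq_mul] using expSeries_summable' (𝕂 := ℝ) (𝔸 := ℝ) (s * r)
  rw [hsum.tsum_smul_const]
  congr 1
  rw [Real.exp_eq_exp_ℝ, exp_eq_tsum ℝ]
  simp [smul_eq_mul]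

section Graded

variable (h : L)

lemma grad_uniq {a b c : L} (ha : ⁅h, a⁆ = -a) (hb : ⁅h, b⁆ = 0) (hc : ⁅h, c⁆ = c)
    (hsum : a + b + c = 0) : a = 0 ∧ b = 0 ∧ c = 0 := by
  have h1 : -a + c = 0 := by
    have := congrArg (fun z => ⁅h, z⁆) hsum
    simpa [lie_add, ha, hb, hc] using this
  have h2 : a + c = 0 := by
    have := congrArg (fun z => ⁅h, z⁆) h1
    simpa [lie_add, ha, hc] using this
  have hac : a = c := by rwa [neg_add_eq_zero] at h1
  have hc0 : c = 0 := by
    have h2' : (2 : ℝ) • c = 0 := by rw [two_smul]; rw [hac] at h2; exact h2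
    simpa using (smul_eq_zero.mp h2')
  have ha0 : a = 0 := by rw [hac, hc0]
  have hb0 : b = 0 := by
    have h3 := hsum; rw [ha0, hc0] at h3; simpa using h3
  exact ⟨ha0, hb0, hc0⟩

variable (hgrad : ∀ x : L, ∃ a b c : L,
      ⁅h, a⁆ = -a ∧ ⁅h, b⁆ = 0 ∧ ⁅h, c⁆ = c ∧ x = a + b + c)

include hgrad in
lemma eig_zero (r : ℝ) (hr1 : r ≠ -1) (hr2 : r ≠ 0) (hr3 : r ≠ 1) (w : L)
    (hw : ⁅h, w⁆ = r • w) : w = 0 := by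
  obtain ⟨a, b, c, ha, hb, hc, hw'⟩ := hgrad w
  have key : (-(1 + r)) • a + (-r) • b + (1 - r) • c = 0 := by
    have h1 : -a + c = r • a + r • b + r • c := by
      have := hw
      rw [hw'] at this
      simpa [lie_add, ha, hb, hc, smul_add] using this
    have h2 : (-a + c) - (r • a + r • b + r • c) = 0 := by rw [h1, sub_self]
    rw [← h2]; module
  obtain ⟨e1, e2, e3⟩ := grad_uniq h (a := (-(1 + r)) • a) (b := (-r) • b) (c := (1 - r) • c)
    (by rw [lie_smul, ha]; module)
    (by rw [lie_smul, hb, smul_zero])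
    (by rw [lie_smul, hc]) key
  have ha0 : a = 0 := by
    have : (-(1 + r)) ≠ 0 := by
      intro hcon; apply hr1; linarith [neg_eq_zero.mp hcon]
    exact (smul_eq_zero.mp e1).resolve_left this
  have hb0 : b = 0 := by
    have : (-r) ≠ 0 := neg_ne_zero.mpr hr2
    exact (smul_eq_zero.mp e2).resolve_left this
  have hc0 : c = 0 := by
    have : (1 - r) ≠ 0 := sub_ne_zero.mpr (fun hcon => hr3 hcon.symm)
    exact (smul_eq_zero.mp e3).resolve_left this
  rw [hw', ha0, hb0, hc0]; simp

lemma bracket_eigen {i j : ℝ} {u v : L} (hu : ⁅h, u⁆ = i • u) (hv : ⁅h, v⁆ = j • v) :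
    ⁅h, ⁅u, v⁆⁆ = (i + j) • ⁅u, v⁆ := by
  rw [leibniz_lie, hu, hv, smul_lie, lie_smul, add_smul]

include hgrad in
lemma psi_bracket (s : ℝ) (u v : L) :
    expAd (s • h) ⁅u, v⁆ = ⁅expAd (s • h) u, expAd (s • h) v⁆ := by
  obtain ⟨a, b, c, ha, hb, hc, hu⟩ := hgrad u
  obtain ⟨a', b', c', ha', hb', hc', hv⟩ := hgrad v
  have ham : ⁅h, a⁆ = (-1 : ℝ) • a := by rw [ha]; module
  have ham' : ⁅h, a'⁆ = (-1 : ℝ) • a' := by rw [ha']; module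
  have hbm : ⁅h, b⁆ = (0 : ℝ) • b := by rw [hb]; module
  have hbm' : ⁅h, b'⁆ = (0 : ℝ) • b' := by rw [hb']; module
  have hcm : ⁅h, c⁆ = (1 : ℝ) • c := by rw [hc]; module
  have hcm' : ⁅h, c'⁆ = (1 : ℝ) • c' := by rw [hc']; module
  have haa' : ⁅a, a'⁆ = 0 :=
    eig_zero h hgrad (-2) (by norm_num) (by norm_num) (by norm_num) _
      (by rw [bracket_eigen h ham ham']; norm_num)
  have hcc' : ⁅c, c'⁆ = 0 :=
    eig_zero h hgrad 2 (by norm_num) (by norm_num) (by norm_num) _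
      (by rw [bracket_eigen h hcm hcm']; norm_num)
  have hA : ⁅h, ⁅a, b'⁆ + ⁅b, a'⁆⁆ = (-1 : ℝ) • (⁅a, b'⁆ + ⁅b, a'⁆) := by
    rw [lie_add, bracket_eigen h ham hbm', bracket_eigen h hbm ham', smul_add]
    norm_num
  have hB : ⁅h, ⁅a, c'⁆ + ⁅b, b'⁆ + ⁅c, a'⁆⁆
      = (0 : ℝ) • (⁅a, c'⁆ + ⁅b, b'⁆ + ⁅c, a'⁆) := by
    rw [lie_add, lie_add, bracket_eigen h ham hcm', bracket_eigen h hbm hbm',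
      bracket_eigen h hcm ham']
    norm_num
  have hC : ⁅h, ⁅b, c'⁆ + ⁅c, b'⁆⁆ = (1 : ℝ) • (⁅b, c'⁆ + ⁅c, b'⁆) := by
    rw [lie_add, bracket_eigen h hbm hcm', bracket_eigen h hcm hbm', smul_add]
    norm_num
  have huv : ⁅u, v⁆ = (⁅a, b'⁆ + ⁅b, a'⁆) + (⁅a, c'⁆ + ⁅b, b'⁆ + ⁅c, a'⁆)
      + (⁅b, c'⁆ + ⁅c, b'⁆) := by
    rw [hu, hv]
    simp only [lie_add, add_lie, haa', hcc']
    abel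
  rw [huv, expAd_add, expAd_add, expAd_eigen h s _ _ hA, expAd_eigen h s _ _ hB,
    expAd_eigen h s _ _ hC, hu, hv, expAd_add, expAd_add, expAd_add, expAd_add,
    expAd_eigen h s _ _ ham, expAd_eigen h s _ _ hbm, expAd_eigen h s _ _ hcm,
    expAd_eigen h s _ _ ham', expAd_eigen h s _ _ hbm', expAd_eigen h s _ _ hcm']
  simp only [mul_neg_one, mul_zero, mul_one, Real.exp_zero, one_smul]
  simp only [lie_add, add_lie, lie_smul, smul_lie, haa', hcc', smul_zero, smul_smul,
    ← Real.exp_add, neg_add_cancel, add_neg_cancel, Real.exp_zero, one_smul, smul_add]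
  abel

end Graded

lemma expAd_conj (φ : L →ₗ[ℝ] L) (hbr : ∀ u v : L, φ ⁅u, v⁆ = ⁅φ u, φ v⁆) (x v : L) :
    expAd (φ x) (φ v) = φ (expAd x v) := by
  have hpow : ∀ n : ℕ, ((LieAlgebra.ad ℝ L (φ x)) ^ n) (φ v)
      = φ (((LieAlgebra.ad ℝ L x) ^ n) v) := by
    intro n
    induction n generalizing v with
    | zero => simp
    | succ n ih =>
        rw [pow_succ', pow_succ']
        simp only [Module.End.mul_apply, LieAlgebra.ad_apply]
        rw [ih, ← hbr]
  have hcont : Continuous φ := φ.continuous_of_finiteDimensional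
  have hs := hasSum_expAd x v
  have h2 := hs.map φ.toAddMonoidHom hcont
  have h3 : (fun n : ℕ => φ.toAddMonoidHom (((n.factorial : ℝ)⁻¹) •
      ((LieAlgebra.ad ℝ L x ^ n) v)))
      = fun n : ℕ => ((n.factorial : ℝ)⁻¹) • ((LieAlgebra.ad ℝ L (φ x) ^ n) (φ v)) := by
    funext n
    simp only [LinearMap.toAddMonoidHom_coe, map_smul, hpow]
  rw [Function.comp_def] at h2
  rw [h3] at h2
  rw [expAd_eq x v]
  exact h2.tsum_eq


lemma expAd_zero_arg (x : L) : expAd (0 : L) x = x := by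
  rw [expAd_eq, TT_zero, exp_zero]
  simp

lemma expAd_h_inv (h : L) (s : ℝ) (x : L) :
    expAd (s • h) (expAd ((-s) • h) x) = x := by
  rw [expAd_eq, expAd_eq, ContinuousLinearEquiv.apply_symm_apply]
  have hneg : TT ((-s) • h) = -(TT (s • h)) := by
    rw [TT_smul, TT_smul]
    module
  have hcomm : Commute (TT (s • h)) (TT ((-s) • h)) := by
    rw [hneg]; exact (Commute.refl (TT (s • h))).neg_right
  have hexp := exp_add_of_commute_of_mem_ball (𝕂 := ℝ) hcomm
      ((expSeries_radius_eq_top ℝ (E →L[ℝ] E)).symm ▸ edist_lt_top _ _)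
      ((expSeries_radius_eq_top ℝ (E →L[ℝ] E)).symm ▸ edist_lt_top _ _)
  have hz : TT (s • h) + TT ((-s) • h) = 0 := by rw [hneg]; exact add_neg_cancel _
  rw [← ContinuousLinearMap.mul_apply, ← hexp, hz, exp_zero, ContinuousLinearMap.one_apply,
    ContinuousLinearEquiv.symm_apply_apply]

lemma expAd_h_fixes (h : L) (s : ℝ) : expAd (s • h) h = h := by
  have := expAd_eigen h s 0 h (by simp)
  simpa using this

/-- `expAd (s • h)` as a linear map. -/
noncomputable def PsiL (h : L) (s : ℝ) : L →ₗ[ℝ] L :=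
  (eqE (L := L)).symm.toLinearEquiv.toLinearMap ∘ₗ (exp (TT (s • h))).toLinearMap ∘ₗ
    (eqE (L := L)).toLinearEquiv.toLinearMap

lemma PsiL_apply (h : L) (s : ℝ) (x : L) : PsiL h s x = expAd (s • h) x := by
  rw [expAd_eq]; rfl

lemma cone_add {C : Set L} (hCcv : Convex ℝ C)
    (hCcone : ∀ r : ℝ, 0 ≤ r → ∀ x ∈ C, r • x ∈ C) {u v : L}
    (hu : u ∈ C) (hv : v ∈ C) : u + v ∈ C := by
  have h1 := hCcv hu hv (by norm_num : (0:ℝ) ≤ 1/2) (by norm_num : (0:ℝ) ≤ 1/2) (by norm_num)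
  have h2 := hCcone 2 (by norm_num) _ h1
  have : (2 : ℝ) • ((1/2 : ℝ) • u + (1/2 : ℝ) • v) = u + v := by
    rw [smul_add, smul_smul, smul_smul]
    norm_num
  rwa [this] at h2

/-- The key derivative-at-zero lemma: if `h - expAd (t•x) h ∈ C` for all `t ≥ 0` and `C` is a
closed cone, then `⁅h, x⁆ ∈ C`. -/
lemma slope_mem (h : L) {C : Set L} (hCcl : IsClosed C)
    (hCcone : ∀ r : ℝ, 0 ≤ r → ∀ x ∈ C, r • x ∈ C) (x : L)
    (hx : ∀ t : ℝ, 0 ≤ t → h - expAd (t • x) h ∈ C) : ⁅h, x⁆ ∈ C := by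
  set A := TT x with hA
  set v := eqE h with hv
  set g : ℝ → EuclideanSpace ℝ (Fin (finrank ℝ L)) := fun t => exp (t • A) v with hg
  have hder : HasDerivAt g (A v) 0 := by
    have h1 := hasDerivAt_exp_smul_const (𝕂 := ℝ) A (0 : ℝ)
    have h2 := h1.clm_apply (hasDerivAt_const (0 : ℝ) v)
    have h00 : (0:ℝ) • A = 0 := zero_smul ℝ A
    rw [h00] at h2
    simpa using h2
  have hslope := hasDerivAt_iff_tendsto_slope.mp hder
  have hkey : ∀ t : ℝ, t⁻¹ • (h - expAd (t • x) h) = eqE.symm (-(slope g 0 t)) := by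
    intro t
    have hg0 : g 0 = v := by
      show exp ((0:ℝ) • A) v = v
      have h00 : (0:ℝ) • A = 0 := zero_smul ℝ A
      rw [h00, exp_zero, ContinuousLinearMap.one_apply]
    have e1 : slope g 0 t = t⁻¹ • (g t - v) := by
      rw [slope_def_module, sub_zero, hg0]
    have e2 : expAd (t • x) h = eqE.symm (g t) := by
      rw [expAd_eq, hg]
      simp only [TT_smul]
      rfl
    rw [e1, e2]
    have e3 : h - eqE.symm (g t) = eqE.symm (v - g t) := by
      rw [map_sub, hv, ContinuousLinearEquiv.symm_apply_apply]
    rw [e3, ← map_smul]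
    congr 1
    module
  have hlim : Filter.Tendsto (fun t : ℝ => t⁻¹ • (h - expAd (t • x) h))
      (nhdsWithin 0 (Set.Ioi 0)) (nhds ⁅h, x⁆) := by
    have hcont : Filter.Tendsto (fun w : EuclideanSpace ℝ (Fin (finrank ℝ L)) =>
        eqE.symm (-w)) (nhds (A v)) (nhds (eqE.symm (-(A v)))) := by
      exact (eqE.symm.continuous.comp continuous_neg).continuousAt
    have h3 := hcont.comp (hslope.mono_left (nhdsWithin_mono 0 (by
      intro t ht
      exact ne_of_gt ht)))
    have h4 : eqE.symm (-(A v)) = ⁅h, x⁆ := by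
      rw [hA, hv, TT_apply, ← map_neg, ContinuousLinearEquiv.symm_apply_apply, ← lie_skew,
        neg_neg]
    rw [h4] at h3
    refine h3.congr ?_
    intro t
    exact (hkey t).symm
  refine hCcl.mem_of_tendsto hlim ?_
  filter_upwards [self_mem_nhdsWithin] with t ht
  exact hCcone t⁻¹ (le_of_lt (inv_pos.mpr ht)) _ (hx t (le_of_lt ht))


open MeasureTheory in
lemma wedge_mem (h : L) {C : Set L} (hCcl : IsClosed C) (hCcv : Convex ℝ C)
    (hCcone : ∀ r : ℝ, 0 ≤ r → ∀ z ∈ C, r • z ∈ C)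
    (hCinv : ∀ y : L, expAd y '' C = C) (h0C : (0 : L) ∈ C)
    (x w : L) (hw : ⁅h, x⁆ = w) (hwC : w ∈ C) (t : ℝ) (ht : 0 ≤ t) :
    h - expAd (t • x) h ∈ C := by
  rcases eq_or_lt_of_le ht with h0 | htpos
  · rw [← h0]
    have h00 : (0 : ℝ) • x = 0 := zero_smul ℝ x
    rw [h00, expAd_zero_arg, sub_self]
    exact h0C
  · have htne : t ≠ 0 := ne_of_gt htpos
    set A := TT x with hA
    set v := (eqE (L := L)) h with hv
    set g : ℝ → EuclideanSpace ℝ (Fin (finrank ℝ L)) := fun s => exp (s • A) (eqE w) with hg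
    set F : ℝ → EuclideanSpace ℝ (Fin (finrank ℝ L)) := fun s => v - exp (s • A) v with hF
    have hAv : A v = -(eqE w) := by
      rw [hA, hv, TT_apply, ← hw, ← lie_skew, map_neg]
    have hder : ∀ s : ℝ, HasDerivAt F (g s) s := by
      intro s
      have h1 := hasDerivAt_exp_smul_const (𝕂 := ℝ) A s
      have h2 := h1.clm_apply (hasDerivAt_const s v)
      have h3 : HasDerivAt (fun u : ℝ => exp (u • A) v) (exp (s • A) (A v)) s := by
        simpa using h2
      have h4 := (hasDerivAt_const s v).sub h3
      have h5 : 0 - exp (s • A) (A v) = g s := by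
        rw [zero_sub, hAv, map_neg, neg_neg, hg]
      rw [← h5]
      exact h4
    have hgc : Continuous g := by
      have h1 : Continuous fun s : ℝ => exp (s • A) :=
        continuous_iff_continuousAt.2 fun s => (hasDerivAt_exp_smul_const (𝕂 := ℝ) A s).continuousAt
      exact ((ContinuousLinearMap.apply ℝ (EuclideanSpace ℝ (Fin (finrank ℝ L)))
        (eqE w)).continuous).comp h1
    have hF0 : F 0 = 0 := by
      rw [hF]
      show v - exp ((0 : ℝ) • A) v = 0
      have h00 : (0 : ℝ) • A = 0 := zero_smul ℝ A
      rw [h00, exp_zero, ContinuousLinearMap.one_apply, sub_self]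
    have hftc : ∫ s in (0:ℝ)..t, g s = F t := by
      have h6 := intervalIntegral.integral_eq_sub_of_hasDerivAt (f := F) (f' := g)
        (fun s _ => hder s) (hgc.intervalIntegrable 0 t)
      rw [h6, hF0, sub_zero]
    have hgK : ∀ s : ℝ, g s ∈ ⇑(eqE (L := L)) '' C := by
      intro s
      have h1 : expAd (s • x) w ∈ C := by
        rw [← hCinv (s • x)]; exact Set.mem_image_of_mem _ hwC
      refine ⟨expAd (s • x) w, h1, ?_⟩
      rw [eL_expAd, TT_smul, hg]
    have hKcl : IsClosed (⇑(eqE (L := L)) '' C) := by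
      rw [ContinuousLinearEquiv.image_eq_preimage_symm]
      exact hCcl.preimage eqE.symm.continuous
    have hKcv : Convex ℝ (⇑(eqE (L := L)) '' C) :=
      hCcv.linear_image ((eqE (L := L)).toLinearEquiv.toLinearMap)
    have hμ0 : volume (Set.Ioc (0:ℝ) t) ≠ 0 := by
      rw [Real.volume_Ioc, sub_zero]
      exact (ENNReal.ofReal_pos.mpr htpos).ne'
    have hμtop : volume (Set.Ioc (0:ℝ) t) ≠ ⊤ := by
      rw [Real.volume_Ioc]; exact ENNReal.ofReal_ne_top
    have hint : IntegrableOn g (Set.Ioc 0 t) volume := (hgc.intervalIntegrable 0 t).1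
    have havg := hKcv.set_average_mem hKcl hμ0 hμtop
      (Filter.Eventually.of_forall fun s => hgK s) hint
    rw [MeasureTheory.setAverage_eq] at havg
    have hvol : volume.real (Set.Ioc (0:ℝ) t) = t := by
      rw [Real.volume_real_Ioc_of_le ht, sub_zero]
    rw [hvol] at havg
    have hint2 : ∫ s in Set.Ioc (0:ℝ) t, g s ∂volume = F t := by
      rw [← hftc, intervalIntegral.integral_of_le ht]
    rw [hint2] at havg
    obtain ⟨u, huC, hu⟩ := havg
    have hfin : h - expAd (t • x) h = t • u := by
      have e1 : h - expAd (t • x) h = eqE.symm (F t) := by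
        rw [hF]
        show _ = eqE.symm (v - exp (t • A) v)
        rw [map_sub, hv, ContinuousLinearEquiv.symm_apply_apply]
        congr 1
        rw [expAd_eq, hA, TT_smul]
      have e2 : F t = t • ((eqE (L := L)) u) := by
        rw [hu, smul_smul, mul_inv_cancel₀ htne, one_smul]
      rw [e1, e2, _root_.map_smul, ContinuousLinearEquiv.symm_apply_apply]
    rw [hfin]
    exact hCcone t ht _ huC

end Aux

/-- if `𝔤` is 3-graded by `ad h`, `τ = e^{πi ad h}` (the linear involution
which is the identity on `𝔤⁰` and `−id` on `𝔤¹ ⊕ 𝔤⁻¹`) and `C` is a pointed invariant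
cone with `τ(C) = −C`, then
`{x ∈ 𝔤 : h − e^{t·ad x}(h) ∈ C for all t ≥ 0} = C₊ + 𝔤⁰ + C₋`, i.e. the Lie wedge of
`S(h,C)` is `C₊ ⊕ 𝔤⁰ ⊕ C₋`. -/
theorem statement2 {L : Type*} [LieRing L] [LieAlgebra ℝ L]
    [TopologicalSpace L] [IsTopologicalAddGroup L] [ContinuousSMul ℝ L] [T2Space L]
    [FiniteDimensional ℝ L]
    (h : L)
    (hgrad : ∀ x : L, ∃ a b c : L,
      ⁅h, a⁆ = -a ∧ ⁅h, b⁆ = 0 ∧ ⁅h, c⁆ = c ∧ x = a + b + c)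
    (C : Set L) (hCcl : IsClosed C) (hCcv : Convex ℝ C)
    (hCcone : ∀ r : ℝ, 0 ≤ r → ∀ x ∈ C, r • x ∈ C)
    (hCinv : ∀ y : L, expAd y '' C = C)
    (hCpt : C ∩ (-C) = {0})
    (τ : L →ₗ[ℝ] L)
    (hτ0 : ∀ b : L, ⁅h, b⁆ = 0 → τ b = b)
    (hτ1 : ∀ c : L, ⁅h, c⁆ = c → τ c = -c)
    (hτm : ∀ a : L, ⁅h, a⁆ = -a → τ a = -a)
    (hτC : τ '' C = -C) :
    {x : L | ∀ t : ℝ, 0 ≤ t → h - expAd (t • x) h ∈ C} =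
      {x : L | ∃ a b c : L, ⁅h, a⁆ = -a ∧ -a ∈ C ∧ ⁅h, b⁆ = 0 ∧
        ⁅h, c⁆ = c ∧ c ∈ C ∧ x = a + b + c} := by
  have h0C : (0 : L) ∈ C := by
    have h00 : (0 : L) ∈ C ∩ (-C) := by rw [hCpt]; exact Set.mem_singleton 0
    exact h00.1
  ext x
  simp only [Set.mem_setOf_eq]
  constructor
  · intro hx
    obtain ⟨a, b, c, ha, hb, hc, hxd⟩ := hgrad x
    have key : ∀ s : ℝ, Real.exp s • c - Real.exp (-s) • a ∈ C := by
      intro s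
      have hbr : ∀ u v : L, (PsiL h s) ⁅u, v⁆ = ⁅PsiL h s u, PsiL h s v⁆ := by
        intro u v
        rw [PsiL_apply, PsiL_apply, PsiL_apply]
        exact psi_bracket h hgrad s u v
      have hφh : PsiL h s h = h := by rw [PsiL_apply]; exact expAd_h_fixes h s
      have hψmem : ∀ t : ℝ, 0 ≤ t → h - expAd (t • expAd (s • h) x) h ∈ C := by
        intro t ht
        have e1 : t • expAd (s • h) x = PsiL h s (t • x) := by
          rw [map_smul, PsiL_apply]
        have e2 : expAd (PsiL h s (t • x)) h = PsiL h s (expAd (t • x) h) := by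
          have e2' := expAd_conj (PsiL h s) hbr (t • x) h
          rwa [hφh] at e2'
        rw [e1, e2]
        have e3 : h - PsiL h s (expAd (t • x) h) = PsiL h s (h - expAd (t • x) h) := by
          rw [map_sub, hφh]
        rw [e3, PsiL_apply, ← hCinv (s • h)]
        exact Set.mem_image_of_mem _ (hx t ht)
      have hbracket : ⁅h, expAd (s • h) x⁆ = Real.exp s • c - Real.exp (-s) • a := by
        have hxe : expAd (s • h) x = Real.exp (-s) • a + b + Real.exp s • c := by
          rw [hxd, expAd_add, expAd_add,
            expAd_eigen h s (-1) a (by rw [ha]; module),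
            expAd_eigen h s 0 b (by rw [hb]; module),
            expAd_eigen h s 1 c (by rw [hc]; module)]
          simp only [mul_neg_one, mul_zero, mul_one, Real.exp_zero, one_smul]
        rw [hxe]
        simp only [lie_add, lie_smul, ha, hb, hc, smul_zero, smul_neg]
        abel
      have hsl := slope_mem h hCcl hCcone _ hψmem
      rwa [hbracket] at hsl
    have hcC : c ∈ C := by
      have seq : ∀ n : ℕ, c - (Real.exp (-2)) ^ n • a ∈ C := by
        intro n
        have h1 := key (n : ℝ)
        have h2 := hCcone (Real.exp (-(n : ℝ))) (Real.exp_nonneg _) _ h1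
        have h3 : Real.exp (-(n : ℝ)) • (Real.exp (n : ℝ) • c - Real.exp (-(n : ℝ)) • a)
            = c - (Real.exp (-2)) ^ n • a := by
          rw [smul_sub, smul_smul, smul_smul, ← Real.exp_add, ← Real.exp_add,
            neg_add_cancel, Real.exp_zero, one_smul]
          congr 2
          rw [← Real.exp_nat_mul]
          congr 1
          ring
        rwa [h3] at h2
      have hlim : Filter.Tendsto (fun n : ℕ => c - (Real.exp (-2)) ^ n • a)
          Filter.atTop (nhds c) := by
        have h1 : Filter.Tendsto (fun n : ℕ => (Real.exp (-2)) ^ n) Filter.atTop (nhds 0) :=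
          tendsto_pow_atTop_nhds_zero_of_lt_one (Real.exp_nonneg _) (by
            have : Real.exp (-2) < Real.exp 0 := Real.exp_lt_exp.mpr (by norm_num)
            simpa using this)
        have h2 : Filter.Tendsto (fun n : ℕ => (Real.exp (-2)) ^ n • a) Filter.atTop
            (nhds (0 : L)) := by
          have h3 := h1.smul_const a
          simpa using h3
        simpa using Filter.Tendsto.const_sub c h2
      exact hCcl.mem_of_tendsto hlim (Filter.Eventually.of_forall seq)
    have haC : -a ∈ C := by
      have seq : ∀ n : ℕ, (Real.exp (-2)) ^ n • c - a ∈ C := by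
        intro n
        have h1 := key (-(n : ℝ))
        have h2 := hCcone (Real.exp (-(n : ℝ))) (Real.exp_nonneg _) _ h1
        have h3 : Real.exp (-(n : ℝ)) • (Real.exp (-(n : ℝ)) • c - Real.exp (-(-(n : ℝ))) • a)
            = (Real.exp (-2)) ^ n • c - a := by
          rw [smul_sub, smul_smul, smul_smul, ← Real.exp_add, ← Real.exp_add, neg_neg,
            neg_add_cancel, Real.exp_zero, one_smul]
          congr 2
          rw [← Real.exp_nat_mul]
          congr 1
          ring
        rwa [h3] at h2
      have hlim : Filter.Tendsto (fun n : ℕ => (Real.exp (-2)) ^ n • c - a)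
          Filter.atTop (nhds (-a)) := by
        have h1 : Filter.Tendsto (fun n : ℕ => (Real.exp (-2)) ^ n) Filter.atTop (nhds 0) :=
          tendsto_pow_atTop_nhds_zero_of_lt_one (Real.exp_nonneg _) (by
            have : Real.exp (-2) < Real.exp 0 := Real.exp_lt_exp.mpr (by norm_num)
            simpa using this)
        have h2 : Filter.Tendsto (fun n : ℕ => (Real.exp (-2)) ^ n • c) Filter.atTop
            (nhds (0 : L)) := by
          have h3 := h1.smul_const c
          simpa using h3
        simpa using h2.sub_const a
      exact hCcl.mem_of_tendsto hlim (Filter.Eventually.of_forall seq)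
    exact ⟨a, b, c, ha, haC, hb, hc, hcC, hxd⟩
  · rintro ⟨a, b, c, ha, haC, hb, hc, hcC, hxd⟩
    intro t ht
    have hw : ⁅h, x⁆ = c + -a := by
      rw [hxd]
      simp only [lie_add, ha, hb, hc]
      abel
    exact wedge_mem h hCcl hCcv hCcone hCinv h0C x (c + -a) hw
      (cone_add hCcv hCcone hcC haC) t ht
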